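/- arXiv:2105.00936 — 2 statements merged into one kernel-verified Lean document; each statement's English description precedes it below -/
import Mathlib

section
/- The subgroup W of GL(F) generated by s_0, s_1, …, s_n coincides with the set {t(μ) ∘ w : μ ∈ P_{C_n}, w ∈ W_0}, and for every g ∈ W the pair (μ, w) with μ ∈ P_{C_n}, w ∈ W_0 and g = t(μ) ∘ w is unique. In other words, W is the (internal) semidirect product t(P_{C_n}) ⋊ W_0. -/
noncomputable section

namespace CvC

/-- Ambient space `F = ℝⁿ ⊕ ℝc`. -/
abbrev F (n : ℕ) := (Fin n → ℝ) × ℝ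

/-- Bilinear form `⟨v + rc, w + sc⟩ = v ⬝ w`. -/
def bform (n : ℕ) (x y : F n) : ℝ := ∑ i, x.1 i * y.1 i

/-- The constant function `c`. -/
def cvec (n : ℕ) : F n := (0, 1)

/-- `eps n i` is the basis vector `ε_i`, for `1 ≤ i ≤ n` (1-based; junk value `0` out of range). -/
def eps (n i : ℕ) : F n :=
  if h : 1 ≤ i ∧ i ≤ n then (Pi.single (⟨i - 1, by omega⟩ : Fin n) 1, 0) else 0

lemma bform_add_left (n : ℕ) (x y z : F n) :
    bform n (x + y) z = bform n x z + bform n y z := by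
  simp [bform, add_mul, Finset.sum_add_distrib]

lemma bform_smul_left (n : ℕ) (c : ℝ) (x z : F n) :
    bform n (c • x) z = c * bform n x z := by
  simp [bform, Finset.mul_sum, mul_assoc]

lemma bform_sub_left (n : ℕ) (x y z : F n) :
    bform n (x - y) z = bform n x z - bform n y z := by
  simp [bform, sub_mul, Finset.sum_sub_distrib]

/-- Reflection `s_f(g) = g − ⟨g, f^∨⟩ f`, `f^∨ = (2/⟨f,f⟩) f`, as a linear endomorphism. -/
def reflMap (n : ℕ) (f : F n) : Module.End ℝ (F n) where
  toFun g := g - ((2 / bform n f f) * bform n g f) • f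
  map_add' x y := by
    try dsimp only
    rw [bform_add_left, mul_add, add_smul]; abel
  map_smul' c x := by
    try dsimp only
    simp only [RingHom.id_apply]
    rw [bform_smul_left, smul_sub, smul_smul, mul_left_comm]

@[simp] lemma reflMap_apply (n : ℕ) (f g : F n) :
    reflMap n f g = g - ((2 / bform n f f) * bform n g f) • f := rfl

lemma reflMap_invol (n : ℕ) (f : F n) (hf : bform n f f ≠ 0) (g : F n) :
    reflMap n f (reflMap n f g) = g := by
  simp only [reflMap_apply]
  rw [bform_sub_left, bform_smul_left, sub_sub, ← add_smul]
  have key : (2 / bform n f f) * bform n g f +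
      (2 / bform n f f) * (bform n g f - (2 / bform n f f) * bform n g f * bform n f f) = 0 := by
    field_simp
    ring
  rw [key, zero_smul, sub_zero]

/-- Translation `t(v)(f) = f − ⟨f, v⟩c`, as a linear endomorphism. -/
def tMap (n : ℕ) (v : Fin n → ℝ) : Module.End ℝ (F n) where
  toFun g := g - bform n g (v, 0) • cvec n
  map_add' x y := by
    try dsimp only
    rw [bform_add_left, add_smul]; abel
  map_smul' c x := by
    try dsimp only
    simp only [RingHom.id_apply]
    rw [bform_smul_left, smul_sub, smul_smul]

@[simp] lemma tMap_apply (n : ℕ) (v : Fin n → ℝ) (g : F n) :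
    tMap n v g = g - bform n g (v, 0) • cvec n := rfl

lemma bform_pair_add (n : ℕ) (g : F n) (v w : Fin n → ℝ) :
    bform n g (v + w, 0) = bform n g (v, 0) + bform n g (w, 0) := by
  simp [bform, mul_add, Finset.sum_add_distrib]

lemma tMap_mul (n : ℕ) (v w : Fin n → ℝ) :
    tMap n v * tMap n w = tMap n (v + w) := by
  apply LinearMap.ext; intro g
  rw [Module.End.mul_apply]
  simp only [tMap_apply]
  rw [bform_sub_left, bform_smul_left]
  have hc : bform n (cvec n) (v, 0) = 0 := by simp [bform, cvec]
  rw [hc, mul_zero, sub_zero, bform_pair_add, add_smul]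
  abel

lemma tMap_zero (n : ℕ) : tMap n 0 = 1 := by
  apply LinearMap.ext; intro g
  rw [Module.End.one_apply, tMap_apply]
  have h0 : bform n g ((0 : Fin n → ℝ), 0) = 0 := by simp [bform]
  rw [h0, zero_smul, sub_zero]

/-- Translation `t(v)` as an invertible endomorphism. -/
def tU (n : ℕ) (v : Fin n → ℝ) : (Module.End ℝ (F n))ˣ where
  val := tMap n v
  inv := tMap n (-v)
  val_inv := by rw [tMap_mul, add_neg_cancel, tMap_zero]
  inv_val := by rw [tMap_mul, neg_add_cancel, tMap_zero]

/-- Reflection `s_f` as an invertible endomorphism (junk value `1` if `⟨f,f⟩ = 0`). -/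
def reflE (n : ℕ) (f : F n) : (Module.End ℝ (F n))ˣ :=
  if hf : bform n f f ≠ 0 then
    { val := reflMap n f
      inv := reflMap n f
      val_inv := by
        apply LinearMap.ext; intro g
        rw [Module.End.mul_apply, Module.End.one_apply]
        exact reflMap_invol n f hf g
      inv_val := by
        apply LinearMap.ext; intro g
        rw [Module.End.mul_apply, Module.End.one_apply]
        exact reflMap_invol n f hf g }
  else 1

/-- The simple affine roots `a_0, a_1, …, a_n` of type `(C_n^∨, C_n)`:
`a_0 = −2ε_1 + c`, `a_j = ε_j − ε_{j+1}` for `1 ≤ j ≤ n−1`, `a_n = 2ε_n`. -/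
def aRootF (n k : ℕ) : F n :=
  if k = 0 then (-(2:ℝ)) • eps n 1 + cvec n
  else if k = n then (2:ℝ) • eps n n
  else eps n k - eps n (k + 1)

/-- The generators `s_0, s_1, …, s_n` of the extended affine Weyl group of type
`(C_n^∨, C_n)`: `s_0 = t(ε_1) ∘ s_{2ε_1}` and `s_i = s_{a_i}` for `1 ≤ i ≤ n`. -/
def sgen (n k : ℕ) : (Module.End ℝ (F n))ˣ :=
  if k = 0 then tU n (eps n 1).1 * reflE n ((2:ℝ) • eps n 1)
  else reflE n (aRootF n k)

/-- The finite Weyl group `W_0 = ⟨s_1, …, s_n⟩` of type `C_n`. -/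
def W0grp (n : ℕ) : Subgroup (Module.End ℝ (F n))ˣ :=
  Subgroup.closure (sgen n '' Set.Icc 1 n)

/-- The extended affine Weyl group `W = ⟨s_0, s_1, …, s_n⟩` of type `(C_n^∨, C_n)`. -/
def Wgrp (n : ℕ) : Subgroup (Module.End ℝ (F n))ˣ :=
  Subgroup.closure (sgen n '' Set.Icc 0 n)

/-- Product of the generators `s_k` along a list of indices. -/
def du (n : ℕ) (l : List ℕ) : (Module.End ℝ (F n))ˣ := (l.map (sgen n)).prod

/-- The weight lattice `P_{C_n} = ℤε_1 ⊕ ⋯ ⊕ ℤε_n` (as a subset of `ℝⁿ`). -/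
def PC (n : ℕ) : Set (Fin n → ℝ) := { v | ∀ i, ∃ m : ℤ, v i = m }

/-- The weight lattice `P_{B_n} = P_{C_n} + ℤ·(1/2)(ε_1 + ⋯ + ε_n)` (as a subset of `ℝⁿ`). -/
def PB (n : ℕ) : Set (Fin n → ℝ) := { v | ∃ k : ℤ, ∀ i, ∃ m : ℤ, v i = m + (k : ℝ)/2 }

/-- `O_1 = {±ε_i + rc}`. -/
def O1 (n : ℕ) : Set (F n) :=
  { x | ∃ i, 1 ≤ i ∧ i ≤ n ∧ ∃ r : ℤ,
      x = eps n i + (r : ℝ) • cvec n ∨ x = -eps n i + (r : ℝ) • cvec n }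

/-- `O_2 = {±2ε_i + 2rc}`. -/
def O2 (n : ℕ) : Set (F n) :=
  { x | ∃ i, 1 ≤ i ∧ i ≤ n ∧ ∃ r : ℤ,
      x = (2:ℝ) • eps n i + ((2*r : ℤ) : ℝ) • cvec n ∨
      x = -((2:ℝ) • eps n i) + ((2*r : ℤ) : ℝ) • cvec n }

/-- `O_3 = {±ε_i + (r + 1/2)c}`. -/
def O3 (n : ℕ) : Set (F n) :=
  { x | ∃ i, 1 ≤ i ∧ i ≤ n ∧ ∃ r : ℤ,
      x = eps n i + ((r : ℝ) + 1/2) • cvec n ∨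
      x = -eps n i + ((r : ℝ) + 1/2) • cvec n }

/-- `O_4 = {±2ε_i + (2r+1)c}`. -/
def O4 (n : ℕ) : Set (F n) :=
  { x | ∃ i, 1 ≤ i ∧ i ≤ n ∧ ∃ r : ℤ,
      x = (2:ℝ) • eps n i + ((2*r+1 : ℤ) : ℝ) • cvec n ∨
      x = -((2:ℝ) • eps n i) + ((2*r+1 : ℤ) : ℝ) • cvec n }

/-- `O_5 = {±ε_i ± ε_j + rc, i < j}`. -/
def O5 (n : ℕ) : Set (F n) :=
  { x | ∃ i j, 1 ≤ i ∧ i < j ∧ j ≤ n ∧ ∃ r : ℤ,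
      x = eps n i + eps n j + (r : ℝ) • cvec n ∨
      x = eps n i - eps n j + (r : ℝ) • cvec n ∨
      x = -eps n i + eps n j + (r : ℝ) • cvec n ∨
      x = -eps n i - eps n j + (r : ℝ) • cvec n }

/-- The five `W`-orbits `O_1, …, O_5` of the affine root system of type `(C_n^∨, C_n)`. -/
def OO (n : ℕ) : Fin 5 → Set (F n) := ![O1 n, O2 n, O3 n, O4 n, O5 n]

/-- The affine root system `S` of type `(C_n^∨, C_n)`. -/
def Sset (n : ℕ) : Set (F n) := O1 n ∪ O2 n ∪ O3 n ∪ O4 n ∪ O5 n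

/-- The set `R̃₊ = {ε_i} ∪ {2ε_i} ∪ {ε_i ± ε_j : i < j}`. -/
def Rtplus (n : ℕ) : Set (F n) :=
  { x | (∃ i, 1 ≤ i ∧ i ≤ n ∧ (x = eps n i ∨ x = (2:ℝ) • eps n i)) ∨
        (∃ i j, 1 ≤ i ∧ i < j ∧ j ≤ n ∧ (x = eps n i + eps n j ∨ x = eps n i - eps n j)) }

/-- The set of positive affine roots `S⁺`. -/
def Splus (n : ℕ) : Set (F n) :=
  { x ∈ Sset n | 0 < x.2 } ∪ (Sset n ∩ Rtplus n)

lemma sum_single_mul (n : ℕ) (j : Fin n) (v : Fin n → ℝ) :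
    ∑ k, v k * (Pi.single j 1 : Fin n → ℝ) k = v j := by
  rw [Finset.sum_eq_single j]
  · simp
  · intro k _ hk
    simp [Pi.single_apply, hk]
  · intro h; exact absurd (Finset.mem_univ j) h

lemma bform_eps_right (n : ℕ) (x : F n) (i : ℕ) (h1 : 1 ≤ i) (h2 : i ≤ n) :
    bform n x (eps n i) = x.1 ⟨i - 1, by omega⟩ := by
  unfold bform eps
  rw [dif_pos ⟨h1, h2⟩]
  exact sum_single_mul n _ x.1

lemma bform_eps_eps (n i : ℕ) (h1 : 1 ≤ i) (h2 : i ≤ n) :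
    bform n (eps n i) (eps n i) = 1 := by
  rw [bform_eps_right n _ i h1 h2]
  unfold eps
  rw [dif_pos ⟨h1, h2⟩]
  simp

/-- `π^{C∨} = π^D`: the linear map with `ε_1 ↦ c − ε_1`, `ε_i ↦ ε_i` (`i ≥ 2`), `c ↦ c`. -/
def piCMap (n : ℕ) : Module.End ℝ (F n) where
  toFun g := g - bform n g (eps n 1) • ((2:ℝ) • eps n 1 - cvec n)
  map_add' x y := by
    try dsimp only
    rw [bform_add_left, add_smul]; abel
  map_smul' c x := by
    try dsimp only
    simp only [RingHom.id_apply]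
    rw [bform_smul_left, smul_sub c, smul_smul]

@[simp] lemma piCMap_apply (n : ℕ) (g : F n) :
    piCMap n g = g - bform n g (eps n 1) • ((2:ℝ) • eps n 1 - cvec n) := rfl

lemma piCMap_invol (n : ℕ) (g : F n) : piCMap n (piCMap n g) = g := by
  rcases Nat.eq_zero_or_pos n with h0 | hpos
  · subst h0
    have he : eps 0 1 = 0 := by simp [eps]
    simp [piCMap_apply, he, bform]
  · have hE := bform_eps_eps n 1 le_rfl hpos
    have hc : bform n (cvec n) (eps n 1) = 0 := by simp [bform, cvec]
    simp only [piCMap_apply]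
    rw [bform_sub_left, bform_smul_left, bform_sub_left, bform_smul_left, hE, hc]
    rw [sub_sub, ← add_smul]
    have key : bform n g (eps n 1) +
        (bform n g (eps n 1) - bform n g (eps n 1) * (2 * 1 - 0)) = 0 := by ring
    rw [key, zero_smul, sub_zero]

/-- `π^{C∨}` as an invertible endomorphism. -/
def piCU (n : ℕ) : (Module.End ℝ (F n))ˣ where
  val := piCMap n
  inv := piCMap n
  val_inv := by
    apply LinearMap.ext; intro g
    rw [Module.End.mul_apply, Module.End.one_apply]
    exact piCMap_invol n g
  inv_val := by
    apply LinearMap.ext; intro g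
    rw [Module.End.mul_apply, Module.End.one_apply]
    exact piCMap_invol n g

/-- `π^{B∨}`: the linear map with `ε_i ↦ (1/2)c − ε_{n−i+1}` and `c ↦ c`. -/
def piBMap (n : ℕ) : Module.End ℝ (F n) where
  toFun g := (fun i => -(g.1 (Fin.rev i)), g.2 + (1/2) * ∑ i, g.1 i)
  map_add' x y := by
    try dsimp only
    refine Prod.ext ?_ ?_
    · funext i; simp [neg_add]; ring
    · simp [Finset.sum_add_distrib]; ring
  map_smul' c x := by
    try dsimp only
    simp only [RingHom.id_apply]
    refine Prod.ext ?_ ?_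
    · funext i; simp [mul_comm]
    · simp only [Prod.smul_snd, Prod.smul_fst, Pi.smul_apply, smul_eq_mul, Finset.mul_sum,
        mul_add]
      congr 1
      exact Finset.sum_congr rfl fun i _ => by ring

@[simp] lemma piBMap_apply (n : ℕ) (g : F n) :
    piBMap n g = (fun i => -(g.1 (Fin.rev i)), g.2 + (1/2) * ∑ i, g.1 i) := rfl

lemma piBMap_invol (n : ℕ) (g : F n) : piBMap n (piBMap n g) = g := by
  simp only [piBMap_apply]
  refine Prod.ext ?_ ?_
  · funext i; simp
  · have h : ∑ i, -(g.1 (Fin.rev i)) = -∑ i, g.1 i := by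
      rw [← Finset.sum_neg_distrib]
      exact Equiv.sum_comp (Equiv.mk Fin.rev Fin.rev Fin.rev_rev Fin.rev_rev) (fun i => -(g.1 i))
    dsimp only
    rw [h]
    ring

/-- `π^{B∨}` as an invertible endomorphism. -/
def piBU (n : ℕ) : (Module.End ℝ (F n))ˣ where
  val := piBMap n
  inv := piBMap n
  val_inv := by
    apply LinearMap.ext; intro g
    rw [Module.End.mul_apply, Module.End.one_apply]
    exact piBMap_invol n g
  inv_val := by
    apply LinearMap.ext; intro g
    rw [Module.End.mul_apply, Module.End.one_apply]
    exact piBMap_invol n g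

/-- The affine root `a_0^{C∨} = −(ε_1 + ε_2) + c` of Ram–Yip type `C_n^∨`. -/
def a0C (n : ℕ) : F n := -(eps n 1 + eps n 2) + cvec n

/-- The reflection `s_0^{C∨} = s_{a_0^{C∨}}`. -/
def s0C (n : ℕ) : (Module.End ℝ (F n))ˣ := reflE n (a0C n)

/-- The extended affine Weyl group of Ram–Yip type `C_n^∨`:
`W^{C∨,RY} = ⟨s_0^{C∨}, s_1, …, s_n, π^{C∨}⟩`. -/
def WCRY (n : ℕ) : Subgroup (Module.End ℝ (F n))ˣ :=
  Subgroup.closure ({s0C n, piCU n} ∪ sgen n '' Set.Icc 1 n)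

/-- The extended affine Weyl group of Ram–Yip type `B_n^∨`:
`W^{B∨,RY} = ⟨s_0, s_1, …, s_n, π^{B∨}⟩`. -/
def WBRY (n : ℕ) : Subgroup (Module.End ℝ (F n))ˣ :=
  Subgroup.closure (insert (piBU n) (sgen n '' Set.Icc 0 n))

/-- The subgroup generated by `W_0` together with all the translations `t(μ)`, `μ ∈ P_{B_n}`. -/
def WBtrans (n : ℕ) : Subgroup (Module.End ℝ (F n))ˣ :=
  Subgroup.closure ((sgen n '' Set.Icc 1 n) ∪ (tU n '' PB n))

/-- The defining relators of the extended affine Weyl group of type `(C_n^∨, C_n)`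
on the generators `σ_0, …, σ_n`. -/
def rels (n : ℕ) : Set (FreeGroup (Fin (n + 1))) :=
  { r | (∃ i : Fin (n+1), r = FreeGroup.of i * FreeGroup.of i) ∨
        (∃ i j : Fin (n+1), ((i:ℕ) + 1 < (j:ℕ) ∨ (j:ℕ) + 1 < (i:ℕ)) ∧
          r = FreeGroup.of i * FreeGroup.of j * (FreeGroup.of i)⁻¹ * (FreeGroup.of j)⁻¹) ∨
        (∃ i j : Fin (n+1), 1 ≤ (i:ℕ) ∧ (i:ℕ) ≤ n - 2 ∧ (j:ℕ) = (i:ℕ) + 1 ∧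
          r = FreeGroup.of i * FreeGroup.of j * FreeGroup.of i *
              ((FreeGroup.of j)⁻¹ * (FreeGroup.of i)⁻¹ * (FreeGroup.of j)⁻¹)) ∨
        (∃ i j : Fin (n+1), ((i:ℕ) = 0 ∨ (i:ℕ) = n - 1) ∧ (j:ℕ) = (i:ℕ) + 1 ∧
          r = FreeGroup.of i * FreeGroup.of j * FreeGroup.of i * FreeGroup.of j *
              ((FreeGroup.of i)⁻¹ * (FreeGroup.of j)⁻¹ * (FreeGroup.of i)⁻¹ *
                (FreeGroup.of j)⁻¹)) }



section Aux

variable {n : ℕ}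

/-- 0-based basis vector. -/
def ev (n : ℕ) (i : Fin n) : F n := (Pi.single i 1, 0)

lemma eps_eq (i : ℕ) (h1 : 1 ≤ i) (h2 : i ≤ n) :
    eps n i = ev n ⟨i - 1, by omega⟩ := by
  rw [eps, dif_pos ⟨h1, h2⟩]; rfl

lemma bform_comm (x y : F n) : bform n x y = bform n y x := by
  simp [bform, mul_comm]

lemma bform_add_right (x y z : F n) :
    bform n x (y + z) = bform n x y + bform n x z := by
  rw [bform_comm, bform_add_left, bform_comm y x, bform_comm z x]

lemma bform_smul_right (c : ℝ) (x z : F n) :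
    bform n x (c • z) = c * bform n x z := by
  rw [bform_comm, bform_smul_left, bform_comm z x]

lemma bform_sub_right (x y z : F n) :
    bform n x (y - z) = bform n x y - bform n x z := by
  rw [bform_comm, bform_sub_left, bform_comm y x, bform_comm z x]

lemma bform_ev_right (x : F n) (j : Fin n) : bform n x (ev n j) = x.1 j :=
  sum_single_mul n j x.1

lemma bform_ev_left (j : Fin n) (x : F n) : bform n (ev n j) x = x.1 j := by
  rw [bform_comm]; exact bform_ev_right x j

lemma bform_ev_ev (i j : Fin n) :
    bform n (ev n i) (ev n j) = if j = i then 1 else 0 := by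
  rw [bform_ev_right]; simp [ev, Pi.single_apply]

lemma bform_cvec_left (x : F n) : bform n (cvec n) x = 0 := by
  simp [bform, cvec]

lemma bform_fst_congr {z z' : F n} (h : z.1 = z'.1) (y : F n) :
    bform n z y = bform n z' y := by simp [bform, h]

lemma bform_pair_fst (z : F n) (y : F n) :
    bform n z (y.1, (0:ℝ)) = bform n z y := rfl

lemma unit_inv_apply (u : (Module.End ℝ (F n))ˣ) (x : F n) :
    (u⁻¹ : _).val (u.val x) = x := by
  have h : (u⁻¹ : _).val * u.val = 1 := by
    rw [← Units.val_mul, inv_mul_cancel, Units.val_one]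
  exact LinearMap.congr_fun h x

lemma unit_apply_inv (u : (Module.End ℝ (F n))ˣ) (x : F n) :
    u.val ((u⁻¹ : _).val x) = x := by
  have h : u.val * (u⁻¹ : _).val = 1 := by
    rw [← Units.val_mul, mul_inv_cancel, Units.val_one]
  exact LinearMap.congr_fun h x

end Aux

section Aux2

variable {n : ℕ}

/-- Key properties of elements of the finite Weyl group. -/
def A0 (n : ℕ) (u : (Module.End ℝ (F n))ˣ) : Prop :=
  (∀ x y : F n, bform n (u.val x) y = bform n x ((u⁻¹ : _).val y)) ∧
  u.val (cvec n) = cvec n ∧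
  (∀ μ ∈ PC n, ((u.val ((μ, 0) : F n)).1 ∈ PC n)) ∧
  (∀ x : F n, (u.val x).2 = x.2)

def Q0 (n : ℕ) (u : (Module.End ℝ (F n))ˣ) : Prop := A0 n u ∧ A0 n u⁻¹

lemma Q0_one : Q0 n 1 := by
  constructor <;>
  · refine ⟨fun x y => by simp, by simp, fun μ hμ => by simpa using hμ, fun x => by simp⟩

lemma A0_mul {u v : (Module.End ℝ (F n))ˣ} (hu : A0 n u) (hv : A0 n v) : A0 n (u * v) := by
  obtain ⟨hu1, hu2, hu3, hu4⟩ := hu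
  obtain ⟨hv1, hv2, hv3, hv4⟩ := hv
  refine ⟨fun x y => ?_, ?_, fun μ hμ => ?_, fun x => ?_⟩
  · have h1 : (u * v).val x = u.val (v.val x) := rfl
    have h2 : ((u * v)⁻¹ : _).val y = (v⁻¹ : _).val ((u⁻¹ : _).val y) := by
      rw [mul_inv_rev]; rfl
    rw [h1, h2, hu1, hv1]
  · show u.val (v.val (cvec n)) = cvec n
    rw [hv2, hu2]
  · show (u.val (v.val ((μ, 0) : F n))).1 ∈ PC n
    have h2 : v.val ((μ, 0) : F n) = (((v.val ((μ, 0) : F n)).1, 0) : F n) :=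
      Prod.ext rfl (hv4 _)
    rw [h2]
    exact hu3 _ (hv3 μ hμ)
  · show (u.val (v.val x)).2 = x.2
    rw [hu4, hv4]

lemma Q0_mul {u v : (Module.End ℝ (F n))ˣ} (hu : Q0 n u) (hv : Q0 n v) : Q0 n (u * v) :=
  ⟨A0_mul hu.1 hv.1, by rw [mul_inv_rev]; exact A0_mul hv.2 hu.2⟩

lemma Q0_inv {u : (Module.End ℝ (F n))ˣ} (hu : Q0 n u) : Q0 n u⁻¹ :=
  ⟨hu.2, by rw [inv_inv]; exact hu.1⟩

lemma bform_reflMap_adj (f x y : F n) :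
    bform n (reflMap n f x) y = bform n x (reflMap n f y) := by
  simp only [reflMap_apply]
  rw [bform_sub_left, bform_smul_left, bform_sub_right, bform_smul_right,
    bform_comm f y]
  ring

lemma bform_reflMap_reflMap {f : F n} (hf : bform n f f ≠ 0) (x y : F n) :
    bform n (reflMap n f x) (reflMap n f y) = bform n x y := by
  rw [bform_reflMap_adj, reflMap_invol n f hf]

lemma reflE_val {f : F n} (hf : bform n f f ≠ 0) :
    (reflE n f).val = reflMap n f := by
  rw [reflE, dif_pos hf]

lemma reflE_inv (f : F n) : (reflE n f)⁻¹ = reflE n f := by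
  rw [reflE]
  split
  · exact Units.ext rfl
  · simp

lemma reflE_mul_self {f : F n} (hf : bform n f f ≠ 0) :
    reflE n f * reflE n f = 1 := by
  apply Units.ext
  rw [Units.val_mul, reflE_val hf, Units.val_one]
  apply LinearMap.ext; intro x
  rw [Module.End.mul_apply, Module.End.one_apply]
  exact reflMap_invol n f hf x

lemma Q0_reflE {f : F n} (hf : bform n f f ≠ 0) (hf2 : f.2 = 0)
    (hPC : ∀ μ ∈ PC n, (reflMap n f ((μ, 0) : F n)).1 ∈ PC n) : Q0 n (reflE n f) := by
  have hA : A0 n (reflE n f) := by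
    refine ⟨fun x y => ?_, ?_, fun μ hμ => ?_, fun x => ?_⟩
    · rw [reflE_inv, reflE_val hf]
      exact bform_reflMap_adj f x y
    · rw [reflE_val hf]
      show reflMap n f (cvec n) = cvec n
      rw [reflMap_apply, bform_cvec_left, mul_zero, zero_smul, sub_zero]
    · rw [reflE_val hf]
      exact hPC μ hμ
    · rw [reflE_val hf]
      show (reflMap n f x).2 = x.2
      rw [reflMap_apply]
      simp [hf2]
  exact ⟨hA, by rw [reflE_inv]; exact hA⟩

lemma reflE_conj {g f : F n} (hg : bform n g g ≠ 0) (hf : bform n f f ≠ 0) :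
    reflE n g * reflE n f * reflE n g = reflE n (reflMap n g f) := by
  have hf' : bform n (reflMap n g f) (reflMap n g f) = bform n f f :=
    bform_reflMap_reflMap hg f f
  have hf'' : bform n (reflMap n g f) (reflMap n g f) ≠ 0 := by rw [hf']; exact hf
  apply Units.ext
  rw [Units.val_mul, Units.val_mul, reflE_val hg, reflE_val hf, reflE_val hf'']
  apply LinearMap.ext; intro x
  simp only [Module.End.mul_apply]
  have h1 : reflMap n f (reflMap n g x) =
      reflMap n g x - ((2 / bform n f f) * bform n (reflMap n g x) f) • f := rfl
  rw [h1, map_sub, map_smul, reflMap_invol n g hg, bform_reflMap_adj]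
  show _ = reflMap n (reflMap n g f) x
  conv_rhs => rw [reflMap_apply]
  rw [hf']

end Aux2

section Aux3

variable {n : ℕ}

lemma PC_zero : (0 : Fin n → ℝ) ∈ PC n := fun i => ⟨0, by simp⟩

lemma PC_add {μ ν : Fin n → ℝ} (hμ : μ ∈ PC n) (hν : ν ∈ PC n) : μ + ν ∈ PC n := by
  intro i
  obtain ⟨a, ha⟩ := hμ i; obtain ⟨b, hb⟩ := hν i
  exact ⟨a + b, by simp [ha, hb]⟩

lemma PC_neg {μ : Fin n → ℝ} (hμ : μ ∈ PC n) : -μ ∈ PC n := by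
  intro i
  obtain ⟨a, ha⟩ := hμ i
  exact ⟨-a, by simp [ha]⟩

lemma PC_single (j : Fin n) : (Pi.single j 1 : Fin n → ℝ) ∈ PC n := by
  intro i
  refine ⟨if i = j then 1 else 0, ?_⟩
  rw [Pi.single_apply]
  split_ifs <;> simp

lemma reflMap_fst_apply (f : F n) (μ : Fin n → ℝ) (i : Fin n) :
    (reflMap n f ((μ, 0) : F n)).1 i
      = μ i - ((2 / bform n f f) * bform n ((μ, 0) : F n) f) * f.1 i := rfl

lemma bform_sub_ev (a b : Fin n) (hab : a ≠ b) :
    bform n (ev n a - ev n b) (ev n a - ev n b) = 2 := by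
  rw [bform_sub_left, bform_sub_right, bform_sub_right, bform_ev_ev, bform_ev_ev,
    bform_ev_ev, bform_ev_ev, if_pos rfl, if_pos rfl, if_neg hab.symm, if_neg hab]
  norm_num

lemma bform_sub_ev_ne_zero (a b : Fin n) (hab : a ≠ b) :
    bform n (ev n a - ev n b) (ev n a - ev n b) ≠ 0 := by
  rw [bform_sub_ev a b hab]; norm_num

lemma bform_pair_sub_ev (μ : Fin n → ℝ) (a b : Fin n) :
    bform n ((μ, 0) : F n) (ev n a - ev n b) = μ a - μ b := by
  rw [bform_sub_right, bform_ev_right, bform_ev_right]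

lemma sub_ev_fst_apply (a b i : Fin n) :
    (ev n a - ev n b).1 i = (if i = a then 1 else 0) - (if i = b then 1 else 0) := by
  simp [ev, Pi.single_apply]

lemma PC_refl_sub (a b : Fin n) (hab : a ≠ b) {μ : Fin n → ℝ} (hμ : μ ∈ PC n) :
    (reflMap n (ev n a - ev n b) ((μ, 0) : F n)).1 ∈ PC n := by
  intro i
  obtain ⟨ma, hma⟩ := hμ a; obtain ⟨mb, hmb⟩ := hμ b; obtain ⟨mi, hmi⟩ := hμ i
  refine ⟨mi - (ma - mb) * ((if i = a then 1 else 0) - (if i = b then 1 else 0)), ?_⟩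
  rw [reflMap_fst_apply, bform_sub_ev a b hab, bform_pair_sub_ev, sub_ev_fst_apply,
    hma, hmb, hmi]
  split_ifs <;> push_cast <;> ring

lemma bform_two_ev (b : Fin n) :
    bform n ((2:ℝ) • ev n b) ((2:ℝ) • ev n b) = 4 := by
  rw [bform_smul_left, bform_smul_right, bform_ev_ev, if_pos rfl]
  norm_num

lemma bform_two_ev_ne_zero (b : Fin n) :
    bform n ((2:ℝ) • ev n b) ((2:ℝ) • ev n b) ≠ 0 := by
  rw [bform_two_ev b]; norm_num

lemma bform_pair_two_ev (μ : Fin n → ℝ) (b : Fin n) :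
    bform n ((μ, 0) : F n) ((2:ℝ) • ev n b) = 2 * μ b := by
  rw [bform_smul_right, bform_ev_right]

lemma two_ev_fst_apply (b i : Fin n) :
    ((2:ℝ) • ev n b).1 i = 2 * (if i = b then 1 else 0) := by
  simp [ev, Pi.single_apply, mul_ite]

lemma PC_refl_two (b : Fin n) {μ : Fin n → ℝ} (hμ : μ ∈ PC n) :
    (reflMap n ((2:ℝ) • ev n b) ((μ, 0) : F n)).1 ∈ PC n := by
  intro i
  obtain ⟨mb, hmb⟩ := hμ b; obtain ⟨mi, hmi⟩ := hμ i
  refine ⟨mi - mb * (if i = b then 2 else 0), ?_⟩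
  rw [reflMap_fst_apply, bform_two_ev b, bform_pair_two_ev, two_ev_fst_apply,
    hmb, hmi]
  split_ifs <;> push_cast <;> ring

lemma aRootF_eq_sub (k : ℕ) (hk1 : 1 ≤ k) (hk2 : k < n) :
    aRootF n k = ev n ⟨k - 1, by omega⟩ - ev n ⟨k, hk2⟩ := by
  rw [aRootF, if_neg (by omega), if_neg (by omega), eps_eq k hk1 (le_of_lt hk2),
    eps_eq (k+1) (by omega) hk2]
  have he : (⟨k + 1 - 1, by omega⟩ : Fin n) = ⟨k, hk2⟩ := Fin.ext (by show k + 1 - 1 = k; omega)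
  rw [he]

lemma aRootF_eq_two (hn : 1 ≤ n) :
    aRootF n n = (2:ℝ) • ev n ⟨n - 1, by omega⟩ := by
  rw [aRootF, if_neg (by omega), if_pos rfl, eps_eq n hn le_rfl]

lemma Q0_sgen (k : ℕ) (hk1 : 1 ≤ k) (hk2 : k ≤ n) : Q0 n (sgen n k) := by
  have hn : 1 ≤ n := le_trans hk1 hk2
  rw [sgen, if_neg (by omega)]
  rcases eq_or_lt_of_le hk2 with rfl | hlt
  · rw [aRootF_eq_two hn]
    refine Q0_reflE (bform_two_ev_ne_zero _) ?_ (fun μ hμ => PC_refl_two _ hμ)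
    simp [ev]
  · have hab : (⟨k - 1, by omega⟩ : Fin n) ≠ ⟨k, hlt⟩ := by
      intro h
      have := Fin.mk.injEq (k-1) (by omega : k - 1 < n) k hlt ▸ h
      omega
    rw [aRootF_eq_sub k hk1 hlt]
    refine Q0_reflE (bform_sub_ev_ne_zero _ _ hab) ?_
      (fun μ hμ => PC_refl_sub _ _ hab hμ)
    simp [ev]

lemma sgen_mem_W0 (k : ℕ) (hk1 : 1 ≤ k) (hk2 : k ≤ n) : sgen n k ∈ W0grp n :=
  Subgroup.subset_closure ⟨k, ⟨hk1, hk2⟩, rfl⟩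

lemma Q0_of_mem {w : (Module.End ℝ (F n))ˣ} (hw : w ∈ W0grp n) : Q0 n w := by
  refine Subgroup.closure_induction (p := fun g _ => Q0 n g) ?_ Q0_one
    (fun x y _ _ px py => Q0_mul px py) (fun x _ px => Q0_inv px) hw
  rintro x ⟨k, ⟨hk1, hk2⟩, rfl⟩
  exact Q0_sgen k hk1 hk2

lemma tU_val (v : Fin n → ℝ) : (tU n v).val = tMap n v := rfl

lemma tU_inv (v : Fin n → ℝ) : (tU n v)⁻¹ = tU n (-v) := Units.ext rfl

lemma tU_zero : tU n 0 = 1 := Units.ext (tMap_zero n)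

lemma tU_add (a b : Fin n → ℝ) : tU n (a + b) = tU n a * tU n b :=
  Units.ext (by rw [Units.val_mul]; exact (tMap_mul n a b).symm)

lemma conj_tU (u : (Module.End ℝ (F n))ˣ) (hQ : Q0 n u) (ν : Fin n → ℝ) :
    u * tU n ν = tU n ((u.val ((ν, 0) : F n)).1) * u := by
  apply Units.ext
  rw [Units.val_mul, Units.val_mul, tU_val, tU_val]
  apply LinearMap.ext; intro x
  rw [Module.End.mul_apply, Module.End.mul_apply, tMap_apply, tMap_apply]
  rw [map_sub, map_smul, hQ.1.2.1]
  have hb : bform n (u.val x) (((u.val ((ν, 0) : F n)).1, 0) : F n)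
      = bform n x ((ν, 0) : F n) := by
    rw [bform_pair_fst, hQ.1.1, unit_inv_apply]
  rw [hb]

end Aux3

section Aux4

variable {n : ℕ}

lemma W0_le_W : W0grp n ≤ Wgrp n := by
  apply Subgroup.closure_mono
  apply Set.image_mono
  intro k hk
  exact ⟨Nat.zero_le k, hk.2⟩

lemma sgen_zero_mem_W (hn : 1 ≤ n) : sgen n 0 ∈ Wgrp n :=
  Subgroup.subset_closure ⟨0, ⟨le_rfl, Nat.zero_le n⟩, rfl⟩

lemma reflMap_sub_two (a b : Fin n) (hab : a ≠ b) :
    reflMap n (ev n a - ev n b) ((2:ℝ) • ev n b) = (2:ℝ) • ev n a := by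
  rw [reflMap_apply, bform_sub_ev a b hab]
  have hb : bform n ((2:ℝ) • ev n b) (ev n a - ev n b) = -2 := by
    rw [bform_smul_left, bform_sub_right, bform_ev_ev, bform_ev_ev,
      if_neg hab, if_pos rfl]
    norm_num
  rw [hb]
  have hc : (2 : ℝ) / 2 * (-2) = -2 := by norm_num
  rw [hc, neg_smul, sub_neg_eq_add, smul_sub]
  abel

/-- `s_{2ε_j} ∈ W_0` by downward induction from `s_n = s_{2ε_n}`. -/
lemma refl_two_ev_mem (hn : 1 ≤ n) :
    ∀ d : ℕ, ∀ j : Fin n, n - 1 - (j : ℕ) = d →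
      reflE n ((2:ℝ) • ev n j) ∈ W0grp n := by
  intro d
  induction d with
  | zero =>
    intro j hj
    have hj' : (⟨n - 1, by omega⟩ : Fin n) = j := Fin.ext (by
      show n - 1 = (j : ℕ); have := j.isLt; omega)
    have h := sgen_mem_W0 n hn le_rfl
    rw [sgen, if_neg (by omega), aRootF_eq_two hn, hj'] at h
    exact h
  | succ d ih =>
    intro j hj
    have hlt : (j : ℕ) + 1 < n := by have := j.isLt; omega
    set j' : Fin n := ⟨(j : ℕ) + 1, hlt⟩ with hj'def
    have hmem' : reflE n ((2:ℝ) • ev n j') ∈ W0grp n := by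
      refine ih j' ?_
      show n - 1 - ((j : ℕ) + 1) = d
      omega
    have hab : j ≠ j' := by
      intro h
      have : (j : ℕ) = (j' : ℕ) := by rw [h]
      simp [hj'def] at this
    have hg := bform_sub_ev_ne_zero j j' hab
    have hf := bform_two_ev_ne_zero (n := n) j'
    have hconj := reflE_conj hg hf
    rw [reflMap_sub_two j j' hab] at hconj
    have hsgen : sgen n ((j : ℕ) + 1) = reflE n (ev n j - ev n j') := by
      have e1 : (⟨(j : ℕ) + 1 - 1, by omega⟩ : Fin n) = j :=
        Fin.ext (by show (j : ℕ) + 1 - 1 = (j : ℕ); omega)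
      rw [sgen, if_neg (by omega), aRootF_eq_sub ((j : ℕ) + 1) (by omega) hlt, e1]
    have hs : reflE n (ev n j - ev n j') ∈ W0grp n := by
      rw [← hsgen]; exact sgen_mem_W0 _ (by omega) (by omega)
    rw [← hconj]
    exact mul_mem (mul_mem hs hmem') hs

/-- `t(ε_j) ∈ W`. -/
lemma tU_single_mem (hn : 2 ≤ n) :
    ∀ d : ℕ, ∀ j : Fin n, (j : ℕ) = d → tU n (Pi.single j 1) ∈ Wgrp n := by
  intro d
  induction d with
  | zero =>
    intro j hj
    have hn1 : 1 ≤ n := by omega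
    have hepsv : eps n 1 = ev n j := by
      rw [eps_eq 1 le_rfl hn1]
      congr 1
      exact Fin.ext (by show 1 - 1 = (j : ℕ); omega)
    have hkey : sgen n 0 * reflE n ((2:ℝ) • ev n j) = tU n (Pi.single j 1) := by
      rw [sgen, if_pos rfl, hepsv]
      rw [mul_assoc, reflE_mul_self (bform_two_ev_ne_zero j), mul_one]
      rfl
    rw [← hkey]
    exact mul_mem (sgen_zero_mem_W hn1) (W0_le_W (refl_two_ev_mem hn1 _ j rfl))
  | succ d ih =>
    intro j hj
    have hlt : d < n := by have := j.isLt; omega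
    set j0 : Fin n := ⟨d, hlt⟩ with hj0def
    have hprev := ih j0 rfl
    have hab : j0 ≠ j := by
      intro h
      have : (j0 : ℕ) = (j : ℕ) := by rw [h]
      simp [hj0def, hj] at this
    have hQ : Q0 n (sgen n (d + 1)) := Q0_sgen (d + 1) (by omega) (by have := j.isLt; omega)
    have hsgen : sgen n (d + 1) = reflE n (ev n j0 - ev n j) := by
      have hd1 : d + 1 < n := by have := j.isLt; omega
      have e1 : (⟨d + 1 - 1, by omega⟩ : Fin n) = j0 :=
        Fin.ext (by show d + 1 - 1 = d; omega)
      have e2 : (⟨d + 1, hd1⟩ : Fin n) = j := Fin.ext (by show d + 1 = (j : ℕ); omega)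
      rw [sgen, if_neg (by omega), aRootF_eq_sub (d + 1) (by omega) hd1, e1, e2]
    have himg : ((sgen n (d + 1)).val ((Pi.single j0 1, 0) : F n)).1 = Pi.single j 1 := by
      rw [hsgen, reflE_val (bform_sub_ev_ne_zero j0 j hab)]
      have h1 : ((Pi.single j0 1, (0:ℝ)) : F n) = ev n j0 := rfl
      rw [h1]
      have h2 : reflMap n (ev n j0 - ev n j) (ev n j0) = ev n j := by
        rw [reflMap_apply, bform_sub_ev j0 j hab]
        have hb : bform n (ev n j0) (ev n j0 - ev n j) = 1 := by
          rw [bform_sub_right, bform_ev_ev, bform_ev_ev, if_pos rfl, if_neg (Ne.symm hab)]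
          norm_num
        rw [hb]
        have hc : (2:ℝ) / 2 * 1 = 1 := by norm_num
        rw [hc, one_smul]
        abel
      rw [h2]
      rfl
    have hconj := conj_tU (sgen n (d + 1)) hQ (Pi.single j0 1)
    rw [himg] at hconj
    have : tU n (Pi.single j 1)
        = sgen n (d + 1) * tU n (Pi.single j0 1) * (sgen n (d + 1))⁻¹ :=
      ((mul_inv_eq_iff_eq_mul).mpr hconj).symm
    rw [this]
    have hsmem : sgen n (d + 1) ∈ Wgrp n :=
      W0_le_W (sgen_mem_W0 (d + 1) (by omega) (by have := j.isLt; omega))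
    exact mul_mem (mul_mem hsmem hprev) (inv_mem hsmem)

/-- `t(μ) ∈ W` for all `μ ∈ P_{C_n}`. -/
lemma tU_mem_W (hn : 2 ≤ n) {μ : Fin n → ℝ} (hμ : μ ∈ PC n) : tU n μ ∈ Wgrp n := by
  let L : AddSubgroup (Fin n → ℝ) :=
    { carrier := {v | tU n v ∈ Wgrp n}
      zero_mem' := by
        show tU n 0 ∈ Wgrp n
        rw [tU_zero]; exact one_mem _
      add_mem' := by
        intro a b ha hb
        show tU n (a + b) ∈ Wgrp n
        rw [tU_add]; exact mul_mem ha hb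
      neg_mem' := by
        intro a ha
        show tU n (-a) ∈ Wgrp n
        rw [← tU_inv]; exact inv_mem ha }
  choose m hm using hμ
  have hsum : μ = ∑ j, (m j : ℤ) • (Pi.single j 1 : Fin n → ℝ) := by
    funext i
    rw [Finset.sum_apply]
    have : ∀ j, ((m j : ℤ) • (Pi.single j 1 : Fin n → ℝ)) i
        = if i = j then (m j : ℝ) else 0 := by
      intro j
      rw [Pi.smul_apply, Pi.single_apply]
      split_ifs <;> simp
    rw [Finset.sum_congr rfl (fun j _ => this j), Finset.sum_ite_eq Finset.univ i _,
      if_pos (Finset.mem_univ i), hm i]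
  have : μ ∈ L := by
    rw [hsum]
    exact AddSubgroup.sum_mem L (fun j _ =>
      AddSubgroup.zsmul_mem L (tU_single_mem hn (j : ℕ) j rfl) (m j))
  exact this

end Aux4

/-- `W = t(P_{C_n}) ⋊ W_0`: every element of `W` is uniquely `t(μ) ∘ w` with
`μ ∈ P_{C_n}` and `w ∈ W_0`. -/
theorem W_eq_semidirect_product (n : ℕ) (hn : 2 ≤ n) :
    (∀ g : (Module.End ℝ (F n))ˣ,
      g ∈ Wgrp n ↔ ∃ μ ∈ PC n, ∃ w ∈ W0grp n, g = tU n μ * w) ∧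
    (∀ μ ∈ PC n, ∀ ν ∈ PC n, ∀ w ∈ W0grp n, ∀ w' ∈ W0grp n,
      tU n μ * w = tU n ν * w' → μ = ν ∧ w = w') := by
  constructor
  · intro g
    constructor
    · intro hg
      refine Subgroup.closure_induction
        (p := fun g _ => ∃ μ ∈ PC n, ∃ w ∈ W0grp n, g = tU n μ * w) ?_ ?_ ?_ ?_ hg
      · rintro x ⟨k, ⟨hk0, hkn⟩, rfl⟩
        rcases Nat.eq_zero_or_pos k with rfl | hk1
        · refine ⟨Pi.single (⟨0, by omega⟩ : Fin n) 1, PC_single _,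
            reflE n ((2:ℝ) • ev n ⟨0, by omega⟩),
            refl_two_ev_mem (by omega) (n - 1) _ (by show n - 1 - 0 = n - 1; omega), ?_⟩
          rw [sgen, if_pos rfl]
          have hepsv : eps n 1 = ev n (⟨0, by omega⟩ : Fin n) := by
            rw [eps_eq 1 le_rfl (by omega)]
          rw [hepsv]
          rfl
        · exact ⟨0, PC_zero, sgen n k, sgen_mem_W0 k hk1 hkn, by rw [tU_zero, one_mul]⟩
      · exact ⟨0, PC_zero, 1, one_mem _, by rw [tU_zero, one_mul]⟩
      · rintro x y _ _ ⟨μ, hμ, w, hw, rfl⟩ ⟨ν, hν, w', hw', rfl⟩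
        have hQ := Q0_of_mem hw
        have h := conj_tU w hQ ν
        refine ⟨μ + (w.val ((ν, 0) : F n)).1, PC_add hμ (hQ.1.2.2.1 ν hν),
          w * w', mul_mem hw hw', ?_⟩
        calc tU n μ * w * (tU n ν * w')
            = tU n μ * (w * tU n ν) * w' := by group
          _ = tU n μ * (tU n ((w.val ((ν, 0) : F n)).1) * w) * w' := by rw [h]
          _ = tU n μ * tU n ((w.val ((ν, 0) : F n)).1) * (w * w') := by group
          _ = tU n (μ + (w.val ((ν, 0) : F n)).1) * (w * w') := by rw [tU_add]
      · rintro x _ ⟨μ, hμ, w, hw, rfl⟩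
        have hQ : Q0 n w⁻¹ := Q0_inv (Q0_of_mem hw)
        have h := conj_tU w⁻¹ hQ (-μ)
        exact ⟨(((w⁻¹ : _).val ((-μ, 0) : F n)).1), hQ.1.2.2.1 (-μ) (PC_neg hμ),
          w⁻¹, inv_mem hw, by rw [mul_inv_rev, tU_inv, h]⟩
    · rintro ⟨μ, hμ, w, hw, rfl⟩
      exact mul_mem (tU_mem_W hn hμ) (W0_le_W hw)
  · intro μ hμ ν hν w hw w' hw' heq
    have hQ := Q0_of_mem hw
    have hQ' := Q0_of_mem hw'
    have hval : ∀ x : F n, tMap n μ (w.val x) = tMap n ν (w'.val x) := by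
      intro x
      have h := congrArg Units.val heq
      rw [Units.val_mul, Units.val_mul, tU_val, tU_val] at h
      exact LinearMap.congr_fun h x
    have hfst : ∀ x : F n, (w.val x).1 = (w'.val x).1 := by
      intro x
      have h := congrArg Prod.fst (hval x)
      simpa [tMap_apply, cvec] using h
    have hsnd : ∀ x : F n,
        bform n (w.val x) ((μ, 0) : F n) = bform n (w'.val x) ((ν, 0) : F n) := by
      intro x
      have h := congrArg Prod.snd (hval x)
      have h2 := hQ.1.2.2.2 x
      have h2' := hQ'.1.2.2.2 x
      have e : ∀ (z : F n) (s : ℝ), (z - s • cvec n).2 = z.2 - s := by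
        intro z s; simp [cvec]
      rw [tMap_apply, tMap_apply, e, e, h2, h2'] at h
      linarith
    have hμν : μ = ν := by
      funext i
      have h := hsnd ((w⁻¹ : _).val (ev n i))
      rw [unit_apply_inv] at h
      have hf := hfst ((w⁻¹ : _).val (ev n i))
      rw [unit_apply_inv] at hf
      rw [bform_fst_congr hf.symm] at h
      rw [bform_ev_left, bform_ev_left] at h
      exact h
    subst hμν
    exact ⟨rfl, mul_left_cancel heq⟩

end CvC
end
end

section
/- Define the set of positive affine roots S⁺ = {α + rc ∈ S : α ∈ ℝⁿ, r > 0} ∪ {α ∈ S ∩ ℝⁿ : α ∈ R̃₊}. Then S is the disjoint union of S⁺ and −S⁺, and S⁺ consists exactly of those elements of S expressible as Σ_{i=0}^n c_i a_i with all coefficients c_i nonnegative rationals (and such an expression can always be chosen with every c_i a nonnegative half-integer). -/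
noncomputable section

namespace CvC

/-! ### Auxiliary material for Statement 6 -/

section Aux6

open Finset

lemma eps_snd (n i : ℕ) : (eps n i).2 = 0 := by
  unfold eps; split <;> rfl

lemma eps_fst (n : ℕ) {i : ℕ} (h1 : 1 ≤ i) (h2 : i ≤ n) :
    (eps n i).1 = Pi.single (⟨i - 1, by omega⟩ : Fin n) 1 := by
  unfold eps; rw [dif_pos ⟨h1, h2⟩]

lemma eps_fst_apply (n : ℕ) {i : ℕ} (h1 : 1 ≤ i) (h2 : i ≤ n) (j : Fin n) :
    (eps n i).1 j = if (j : ℕ) = i - 1 then 1 else 0 := by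
  rw [eps_fst n h1 h2, Pi.single_apply]
  by_cases h : (j : ℕ) = i - 1
  · rw [if_pos h, if_pos (Fin.ext h)]
  · rw [if_neg h, if_neg (fun hc => h (by rw [hc]))]

lemma cvec_fst (n : ℕ) : (cvec n).1 = 0 := rfl
lemma cvec_snd (n : ℕ) : (cvec n).2 = 1 := rfl

lemma aRootF_snd (n : ℕ) (hn : 2 ≤ n) (k : ℕ) :
    (aRootF n k).2 = if k = 0 then 1 else 0 := by
  have hn0 : ¬ (n = 0) := by omega
  unfold aRootF
  by_cases h0 : k = 0
  · simp [h0, eps_snd, cvec_snd, hn0]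
  · by_cases hn' : k = n <;> simp [h0, hn', eps_snd, hn0]

lemma aRootF_fst (n : ℕ) (hn : 2 ≤ n) {k : ℕ} (hk : k ≤ n) (j : Fin n) :
    (aRootF n k).1 j =
      (if k = (j : ℕ) + 1 then (if k = n then 2 else 1) else 0)
      + (if k = (j : ℕ) then (if k = 0 then -2 else -1) else 0) := by
  have hj := j.isLt
  unfold aRootF
  by_cases h0 : k = 0
  · rw [if_pos h0, Prod.fst_add, Prod.smul_fst, cvec_fst, Pi.add_apply,
      Pi.smul_apply, Pi.zero_apply, eps_fst_apply n le_rfl (by omega : 1 ≤ n) j,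
      smul_eq_mul]
    split_ifs <;> first | (exfalso; omega) | norm_num
  · rw [if_neg h0]
    by_cases hn' : k = n
    · rw [if_pos hn', Prod.smul_fst, Pi.smul_apply,
        eps_fst_apply n (by omega : 1 ≤ n) le_rfl j, smul_eq_mul]
      split_ifs <;> first | (exfalso; omega) | norm_num
    · rw [if_neg hn', Prod.fst_sub, Pi.sub_apply,
        eps_fst_apply n (by omega : 1 ≤ k) (by omega : k ≤ n) j,
        eps_fst_apply n (by omega : 1 ≤ k + 1) (by omega : k + 1 ≤ n) j]
      split_ifs <;> first | (exfalso; omega) | norm_num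

/-- Partial sum of the first `k` coordinates. -/
def psum (n : ℕ) (v : Fin n → ℝ) (k : ℕ) : ℝ :=
  ∑ l ∈ Finset.univ.filter (fun l : Fin n => (l : ℕ) < k), v l

lemma psum_zero (n : ℕ) (v : Fin n → ℝ) : psum n v 0 = 0 := by simp [psum]

lemma psum_top (n : ℕ) (v : Fin n → ℝ) {k : ℕ} (hk : n ≤ k) :
    psum n v k = ∑ l, v l := by
  unfold psum
  rw [Finset.filter_true_of_mem (fun l _ => lt_of_lt_of_le l.isLt hk)]

lemma psum_succ (n : ℕ) (v : Fin n → ℝ) {k : ℕ} (hk : k < n) :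
    psum n v (k + 1) = psum n v k + v ⟨k, hk⟩ := by
  unfold psum
  have hins : Finset.univ.filter (fun l : Fin n => (l : ℕ) < k + 1)
      = insert (⟨k, hk⟩ : Fin n) (Finset.univ.filter (fun l : Fin n => (l : ℕ) < k)) := by
    ext l; simp [Fin.ext_iff]; omega
  rw [hins, Finset.sum_insert (by simp)]
  ring

lemma psum_single (n : ℕ) (m : Fin n) (k : ℕ) :
    psum n (Pi.single m 1) k = if (m : ℕ) < k then 1 else 0 := by
  unfold psum
  by_cases hm : (m : ℕ) < k
  · rw [if_pos hm]
    rw [Finset.sum_eq_single_of_mem m (by simp [hm])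
      (fun b _ hb => by simp [Pi.single_apply, hb])]
    simp
  · rw [if_neg hm]
    apply Finset.sum_eq_zero
    intro l hl
    simp only [Finset.mem_filter] at hl
    have hlm : l ≠ m := fun h => hm (h ▸ hl.2)
    simp [Pi.single_apply, hlm]

/-- Coefficient of `a_k` in the expansion of `x`. -/
def coefR (n : ℕ) (x : F n) (k : ℕ) : ℝ :=
  if k = 0 then x.2
  else if k = n then x.2 + (1/2) * ∑ l, x.1 l
  else 2 * x.2 + psum n x.1 k

lemma coefR_zero (n : ℕ) (x : F n) : coefR n x 0 = x.2 := by rw [coefR, if_pos rfl]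

lemma coefR_mid (n : ℕ) (x : F n) {k : ℕ} (h1 : k ≠ 0) (h2 : k ≠ n) :
    coefR n x k = 2 * x.2 + psum n x.1 k := by rw [coefR, if_neg h1, if_neg h2]

lemma coefR_top (n : ℕ) (x : F n) (hn : n ≠ 0) :
    coefR n x n = x.2 + (1/2) * ∑ l, x.1 l := by rw [coefR, if_neg hn, if_pos rfl]

lemma master (n : ℕ) (hn : 2 ≤ n) (x : F n) :
    ∑ k ∈ Finset.range (n+1), coefR n x k • aRootF n k = x := by
  apply Prod.ext
  · rw [Prod.fst_sum]
    funext j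
    rw [Finset.sum_apply]
    have hjlt := j.isLt
    have heta : (⟨(j : ℕ), hjlt⟩ : Fin n) = j := by simp
    simp only [Prod.smul_fst, Pi.smul_apply, smul_eq_mul]
    have hval : ∑ k ∈ Finset.range (n+1), coefR n x k * (aRootF n k).1 j
        = ∑ k ∈ ({(j : ℕ), (j : ℕ) + 1} : Finset ℕ), coefR n x k * (aRootF n k).1 j := by
      rw [eq_comm]
      apply Finset.sum_subset
      · intro k hk
        simp only [Finset.mem_insert, Finset.mem_singleton] at hk
        simp only [Finset.mem_range]
        omega
      · intro k hk hknot
        simp only [Finset.mem_insert, Finset.mem_singleton, not_or] at hknot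
        simp only [Finset.mem_range] at hk
        rw [aRootF_fst n hn (by omega) j]
        rw [if_neg (by omega), if_neg (by omega)]
        ring
    rw [hval, Finset.sum_pair (by omega : (j : ℕ) ≠ (j : ℕ) + 1)]
    rw [aRootF_fst n hn (by omega : (j : ℕ) ≤ n) j,
      aRootF_fst n hn (by omega : (j : ℕ) + 1 ≤ n) j]
    have hpsucc : psum n x.1 ((j : ℕ) + 1) = psum n x.1 (j : ℕ) + x.1 j := by
      rw [psum_succ n x.1 hjlt, heta]
    rw [if_neg (by omega : ¬ ((j:ℕ) = (j:ℕ)+1)), if_pos rfl,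
      if_pos rfl, if_neg (by omega : ¬ ((j:ℕ)+1 = (j:ℕ)))]
    by_cases hj0 : (j : ℕ) = 0
    · have h1n : ((j:ℕ)+1) ≠ n := by omega
      rw [if_pos hj0, if_neg h1n,
        show coefR n x (j : ℕ) = x.2 from by rw [hj0, coefR_zero],
        coefR_mid n x (k := (j:ℕ)+1) (by omega) h1n, hpsucc, hj0, psum_zero]
      ring
    · rw [if_neg hj0, coefR_mid n x hj0 (by omega : (j:ℕ) ≠ n)]
      by_cases h1n : (j:ℕ) + 1 = n
      · rw [if_pos h1n, h1n, coefR_top n x (by omega)]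
        have hsum : ∑ l, x.1 l = psum n x.1 (j:ℕ) + x.1 j := by
          rw [← psum_top n x.1 (by omega : n ≤ (j:ℕ)+1), hpsucc]
        rw [hsum]
        ring
      · rw [if_neg h1n, coefR_mid n x (by omega) h1n, hpsucc]
        ring
  · rw [Prod.snd_sum]
    rw [Finset.sum_eq_single_of_mem 0 (Finset.mem_range.mpr (by omega))
      (fun k _ hk0 => by rw [Prod.smul_snd, aRootF_snd n hn, if_neg hk0]; simp)]
    simp [coefR_zero, aRootF_snd n hn, Prod.smul_snd]

lemma psum_single' (n : ℕ) {i : ℕ} (h1 : 1 ≤ i) (h2 : i ≤ n) (k : ℕ) :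
    psum n (Pi.single (⟨i - 1, by omega⟩ : Fin n) 1) k = if i ≤ k then 1 else 0 := by
  rw [psum_single]
  have hv : (((⟨i - 1, by omega⟩ : Fin n)) : ℕ) = i - 1 := rfl
  rw [hv]
  by_cases h : i ≤ k
  · rw [if_pos (by omega), if_pos h]
  · rw [if_neg (by omega), if_neg h]

lemma toNat_cast_real {v : ℤ} (h : 0 ≤ v) : ((v.toNat : ℕ) : ℝ) = (v : ℝ) := by
  exact_mod_cast congrArg (Int.cast : ℤ → ℝ) (Int.toNat_of_nonneg h)

lemma uniform (n : ℕ) (hn : 2 ≤ n) (i j : ℕ) (a b T : ℤ)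
    (hi : 1 ≤ i) (hij : i ≤ j) (hj : j ≤ n) (hT : 0 ≤ T)
    (hmin : 0 ≤ T + min 0 (min a (a + b))) :
    ∃ m : ℕ → ℕ, ((a:ℝ) • eps n i + (b:ℝ) • eps n j + ((T:ℝ)/2) • cvec n)
      = ∑ k ∈ Finset.range (n+1), ((m k : ℝ)/2) • aRootF n k := by
  set x : F n := (a:ℝ) • eps n i + (b:ℝ) • eps n j + ((T:ℝ)/2) • cvec n with hxdef
  have h2 : x.2 = (T:ℝ)/2 := by
    simp only [hxdef, Prod.snd_add, Prod.smul_snd, eps_snd, cvec_snd, smul_eq_mul,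
      mul_zero, mul_one, add_zero, zero_add]
  have hfst : x.1 = (a:ℝ) • (Pi.single (⟨i - 1, by omega⟩ : Fin n) (1:ℝ) : Fin n → ℝ)
      + (b:ℝ) • (Pi.single (⟨j - 1, by omega⟩ : Fin n) (1:ℝ) : Fin n → ℝ) := by
    simp only [hxdef, Prod.fst_add, Prod.smul_fst, cvec_fst,
      eps_fst n hi (le_trans hij hj), eps_fst n (le_trans hi hij) hj, smul_zero, add_zero]
  have hps : ∀ k : ℕ, psum n x.1 k
      = (a:ℝ) * (if i ≤ k then 1 else 0) + (b:ℝ) * (if j ≤ k then 1 else 0) := by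
    intro k
    have e1 : psum n x.1 k
        = (a:ℝ) * psum n (Pi.single (⟨i - 1, by omega⟩ : Fin n) 1) k
          + (b:ℝ) * psum n (Pi.single (⟨j - 1, by omega⟩ : Fin n) 1) k := by
      unfold psum
      rw [hfst]
      simp only [Pi.add_apply, Pi.smul_apply, smul_eq_mul]
      rw [Finset.sum_add_distrib, Finset.mul_sum, Finset.mul_sum]
    rw [e1, psum_single' n hi (le_trans hij hj), psum_single' n (le_trans hi hij) hj]
  have hsum : ∑ l, x.1 l = (a:ℝ) + (b:ℝ) := by
    rw [← psum_top n x.1 (le_refl n), hps n, if_pos (le_trans hij hj), if_pos hj]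
    ring
  refine ⟨fun k => if k = 0 then T.toNat else if k = n then (T + a + b).toNat
      else (2*T + 2*a*(if i ≤ k then 1 else 0) + 2*b*(if j ≤ k then 1 else 0)).toNat, ?_⟩
  rw [← master n hn x]
  apply Finset.sum_congr rfl
  intro k hk
  rw [Finset.mem_range] at hk
  have h1' : min 0 (min a (a+b)) ≤ 0 := min_le_left _ _
  have h2' : min 0 (min a (a+b)) ≤ a := le_trans (min_le_right _ _) (min_le_left _ _)
  have h3' : min 0 (min a (a+b)) ≤ a + b := le_trans (min_le_right _ _) (min_le_right _ _)
  congr 1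
  dsimp only
  by_cases hk0 : k = 0
  · subst hk0
    rw [if_pos rfl, coefR_zero, h2, toNat_cast_real hT]
  · rw [if_neg hk0]
    by_cases hkn : k = n
    · rw [if_pos hkn, hkn, coefR_top n x (by omega), h2, hsum]
      have hab : (0:ℤ) ≤ T + a + b := by omega
      rw [toNat_cast_real hab]
      push_cast
      ring
    · rw [if_neg hkn, coefR_mid n x hk0 hkn, h2, hps k]
      split_ifs with hik hjk hjk
      · have hnn : (0:ℤ) ≤ 2 * T + 2 * a * 1 + 2 * b * 1 := by omega
        rw [toNat_cast_real hnn]; push_cast; ring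
      · have hnn : (0:ℤ) ≤ 2 * T + 2 * a * 1 + 2 * b * 0 := by omega
        rw [toNat_cast_real hnn]; push_cast; ring
      · omega
      · have hnn : (0:ℤ) ≤ 2 * T + 2 * a * 0 + 2 * b * 0 := by omega
        rw [toNat_cast_real hnn]; push_cast; ring

/-- The linear functional `x ↦ ∑ (n − l) x_l`, positive on `R̃₊`. -/
def wlin (n : ℕ) (x : F n) : ℝ := ∑ l : Fin n, ((n : ℝ) - (l : ℕ)) * x.1 l

lemma wlin_add (n : ℕ) (x y : F n) : wlin n (x + y) = wlin n x + wlin n y := by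
  unfold wlin
  simp [Prod.fst_add, mul_add, Finset.sum_add_distrib]

lemma wlin_smul (n : ℕ) (c : ℝ) (x : F n) : wlin n (c • x) = c * wlin n x := by
  unfold wlin
  rw [Finset.mul_sum]
  apply Finset.sum_congr rfl
  intro l _
  simp [Prod.smul_fst]
  ring

lemma wlin_neg (n : ℕ) (x : F n) : wlin n (-x) = - wlin n x := by
  rw [← neg_one_smul ℝ x, wlin_smul]; ring

lemma wlin_sub (n : ℕ) (x y : F n) : wlin n (x - y) = wlin n x - wlin n y := by
  rw [sub_eq_add_neg, wlin_add, wlin_neg]; ring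

lemma wlin_sum (n : ℕ) (s : Finset ℕ) (f : ℕ → F n) :
    wlin n (∑ k ∈ s, f k) = ∑ k ∈ s, wlin n (f k) := by
  unfold wlin
  rw [Prod.fst_sum]
  simp only [Finset.sum_apply, Finset.mul_sum]
  rw [Finset.sum_comm]

lemma wlin_eps (n : ℕ) {i : ℕ} (h1 : 1 ≤ i) (h2 : i ≤ n) :
    wlin n (eps n i) = (n : ℝ) - i + 1 := by
  unfold wlin
  rw [eps_fst n h1 h2]
  rw [Finset.sum_eq_single_of_mem (⟨i - 1, by omega⟩ : Fin n) (Finset.mem_univ _)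
    (fun b _ hb => by simp [Pi.single_apply, hb])]
  have hv : (((⟨i - 1, by omega⟩ : Fin n)) : ℕ) = i - 1 := rfl
  rw [hv]
  simp only [Pi.single_apply, if_pos rfl, mul_one]
  rw [Nat.cast_sub h1]
  push_cast
  ring

lemma wlin_aRootF_nonneg (n : ℕ) (hn : 2 ≤ n) {k : ℕ} (h1 : 1 ≤ k) (h2 : k ≤ n) :
    0 ≤ wlin n (aRootF n k) := by
  unfold aRootF
  rw [if_neg (by omega : ¬ k = 0)]
  by_cases hkn : k = n
  · rw [if_pos hkn, wlin_smul, wlin_eps n (by omega) le_rfl]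
    nlinarith [le_refl (n:ℝ)]
  · rw [if_neg hkn, wlin_sub, wlin_eps n h1 (by omega),
      wlin_eps n (by omega) (by omega : k + 1 ≤ n)]
    have hc : ((k + 1 : ℕ) : ℝ) = (k : ℝ) + 1 := by push_cast; ring
    rw [hc]
    linarith

lemma wlin_pos_Rtplus (n : ℕ) {x : F n} (hx : x ∈ Rtplus n) : 0 < wlin n x := by
  simp only [Rtplus, Set.mem_setOf_eq] at hx
  rcases hx with ⟨i, h1, h2, hx | hx⟩ | ⟨i, j, h1, hij, hj, hx | hx⟩ <;> subst hx
  · rw [wlin_eps n h1 h2]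
    have : (i:ℝ) ≤ n := by exact_mod_cast h2
    linarith
  · rw [wlin_smul, wlin_eps n h1 h2]
    have : (i:ℝ) ≤ n := by exact_mod_cast h2
    linarith
  · rw [wlin_add, wlin_eps n h1 (by omega), wlin_eps n (by omega) hj]
    have hi : (i:ℝ) ≤ n := by exact_mod_cast (by omega : i ≤ n)
    have hj' : (j:ℝ) ≤ n := by exact_mod_cast hj
    linarith
  · rw [wlin_sub, wlin_eps n h1 (by omega), wlin_eps n (by omega) hj]
    have : (i:ℝ) < j := by exact_mod_cast hij
    linarith

lemma Rtplus_snd (n : ℕ) {x : F n} (hx : x ∈ Rtplus n) : x.2 = 0 := by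
  simp only [Rtplus, Set.mem_setOf_eq] at hx
  rcases hx with ⟨i, h1, h2, hx | hx⟩ | ⟨i, j, h1, hij, hj, hx | hx⟩ <;> subst hx <;>
    simp [Prod.snd_add, Prod.snd_sub, Prod.smul_snd, eps_snd]

lemma Sset_neg (n : ℕ) {x : F n} (hx : x ∈ Sset n) : -x ∈ Sset n := by
  simp only [Sset, Set.mem_union] at hx ⊢
  rcases hx with ((((h|h)|h)|h)|h)
  · refine Or.inl (Or.inl (Or.inl (Or.inl ?_)))
    simp only [O1, Set.mem_setOf_eq] at h ⊢
    obtain ⟨i, h1, h2, r, hx | hx⟩ := h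
    · exact ⟨i, h1, h2, -r, Or.inr (by subst hx; push_cast; module)⟩
    · exact ⟨i, h1, h2, -r, Or.inl (by subst hx; push_cast; module)⟩
  · refine Or.inl (Or.inl (Or.inl (Or.inr ?_)))
    simp only [O2, Set.mem_setOf_eq] at h ⊢
    obtain ⟨i, h1, h2, r, hx | hx⟩ := h
    · exact ⟨i, h1, h2, -r, Or.inr (by subst hx; push_cast; module)⟩
    · exact ⟨i, h1, h2, -r, Or.inl (by subst hx; push_cast; module)⟩
  · refine Or.inl (Or.inl (Or.inr ?_))
    simp only [O3, Set.mem_setOf_eq] at h ⊢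
    obtain ⟨i, h1, h2, r, hx | hx⟩ := h
    · exact ⟨i, h1, h2, -1-r, Or.inr (by subst hx; push_cast; module)⟩
    · exact ⟨i, h1, h2, -1-r, Or.inl (by subst hx; push_cast; module)⟩
  · refine Or.inl (Or.inr ?_)
    simp only [O4, Set.mem_setOf_eq] at h ⊢
    obtain ⟨i, h1, h2, r, hx | hx⟩ := h
    · exact ⟨i, h1, h2, -1-r, Or.inr (by subst hx; push_cast; module)⟩
    · exact ⟨i, h1, h2, -1-r, Or.inl (by subst hx; push_cast; module)⟩
  · refine Or.inr ?_
    simp only [O5, Set.mem_setOf_eq] at h ⊢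
    obtain ⟨i, j, h1, hij, hj, r, hx | hx | hx | hx⟩ := h
    · exact ⟨i, j, h1, hij, hj, -r, Or.inr (Or.inr (Or.inr (by subst hx; push_cast; module)))⟩
    · exact ⟨i, j, h1, hij, hj, -r, Or.inr (Or.inr (Or.inl (by subst hx; push_cast; module)))⟩
    · exact ⟨i, j, h1, hij, hj, -r, Or.inr (Or.inl (by subst hx; push_cast; module))⟩
    · exact ⟨i, j, h1, hij, hj, -r, Or.inl (by subst hx; push_cast; module)⟩

lemma zero_level (n : ℕ) (hn : 2 ≤ n) {x : F n} (hx : x ∈ Sset n) (h0 : x.2 = 0) :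
    x ∈ Rtplus n ∨ -x ∈ Rtplus n := by
  simp only [Sset, Set.mem_union] at hx
  simp only [Rtplus, Set.mem_setOf_eq]
  rcases hx with ((((h|h)|h)|h)|h)
  · simp only [O1, Set.mem_setOf_eq] at h
    obtain ⟨i, h1, h2, r, hx | hx⟩ := h <;> subst hx <;>
      simp only [Prod.snd_add, Prod.snd_neg, Prod.smul_snd, eps_snd, cvec_snd,
        smul_eq_mul, mul_one, neg_zero, zero_add] at h0
    · exact Or.inl (Or.inl ⟨i, h1, h2, Or.inl (by rw [h0]; module)⟩)
    · exact Or.inr (Or.inl ⟨i, h1, h2, Or.inl (by rw [h0]; module)⟩)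
  · simp only [O2, Set.mem_setOf_eq] at h
    obtain ⟨i, h1, h2, r, hx | hx⟩ := h <;> subst hx <;>
      simp only [Prod.snd_add, Prod.snd_neg, Prod.smul_snd, eps_snd, cvec_snd,
        smul_eq_mul, mul_one, mul_zero, neg_zero, zero_add] at h0
    · exact Or.inl (Or.inl ⟨i, h1, h2, Or.inr (by rw [h0]; module)⟩)
    · exact Or.inr (Or.inl ⟨i, h1, h2, Or.inr (by rw [h0]; module)⟩)
  · exfalso
    simp only [O3, Set.mem_setOf_eq] at h
    obtain ⟨i, h1, h2, r, hx | hx⟩ := h <;> subst hx <;>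
      simp only [Prod.snd_add, Prod.snd_neg, Prod.smul_snd, eps_snd, cvec_snd,
        smul_eq_mul, mul_one, neg_zero, zero_add] at h0 <;>
    · have hc : ((2*r + 1 : ℤ) : ℝ) = 0 := by push_cast; linarith
      have : (2*r + 1 : ℤ) = 0 := by exact_mod_cast hc
      omega
  · exfalso
    simp only [O4, Set.mem_setOf_eq] at h
    obtain ⟨i, h1, h2, r, hx | hx⟩ := h <;> subst hx <;>
      simp only [Prod.snd_add, Prod.snd_neg, Prod.smul_snd, eps_snd, cvec_snd,
        smul_eq_mul, mul_one, mul_zero, neg_zero, zero_add] at h0 <;>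
    · have : (2*r + 1 : ℤ) = 0 := by exact_mod_cast h0
      omega
  · simp only [O5, Set.mem_setOf_eq] at h
    obtain ⟨i, j, h1, hij, hj, r, hx | hx | hx | hx⟩ := h <;> subst hx <;>
      simp only [Prod.snd_add, Prod.snd_sub, Prod.snd_neg, Prod.smul_snd, eps_snd,
        cvec_snd, smul_eq_mul, mul_one, neg_zero, zero_add, add_zero, sub_zero,
        zero_sub, neg_eq_zero] at h0
    · exact Or.inl (Or.inr ⟨i, j, h1, hij, hj, Or.inl (by rw [h0]; module)⟩)
    · exact Or.inl (Or.inr ⟨i, j, h1, hij, hj, Or.inr (by rw [h0]; module)⟩)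
    · exact Or.inr (Or.inr ⟨i, j, h1, hij, hj, Or.inr (by rw [h0]; module)⟩)
    · exact Or.inr (Or.inr ⟨i, j, h1, hij, hj, Or.inl (by rw [h0]; module)⟩)

lemma Splus_cases (n : ℕ) {x : F n} (h : x ∈ Splus n) :
    (x ∈ Sset n ∧ 0 < x.2) ∨ (x ∈ Sset n ∧ x ∈ Rtplus n) := by
  simp only [Splus, Set.mem_union, Set.mem_sep_iff, Set.mem_inter_iff] at h
  exact h

lemma mem_Splus_of_pos (n : ℕ) {x : F n} (h1 : x ∈ Sset n) (h2 : 0 < x.2) :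
    x ∈ Splus n := by
  simp only [Splus, Set.mem_union, Set.mem_sep_iff, Set.mem_inter_iff]
  exact Or.inl ⟨h1, h2⟩

lemma mem_Splus_of_Rt (n : ℕ) {x : F n} (h1 : x ∈ Sset n) (h2 : x ∈ Rtplus n) :
    x ∈ Splus n := by
  simp only [Splus, Set.mem_union, Set.mem_sep_iff, Set.mem_inter_iff]
  exact Or.inr ⟨h1, h2⟩

lemma snd_of_sum (n : ℕ) (hn : 2 ≤ n) (c : ℕ → ℝ) :
    (∑ k ∈ Finset.range (n+1), c k • aRootF n k).2 = c 0 := by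
  rw [Prod.snd_sum, Finset.sum_eq_single_of_mem 0 (Finset.mem_range.mpr (by omega))
    (fun k _ hk0 => by rw [Prod.smul_snd, aRootF_snd n hn, if_neg hk0]; simp)]
  simp [aRootF_snd n hn, Prod.smul_snd]

lemma splus_expand (n : ℕ) (hn : 2 ≤ n) {x : F n} (hx : x ∈ Splus n) :
    ∃ m : ℕ → ℕ, x = ∑ k ∈ Finset.range (n+1), ((m k : ℝ)/2) • aRootF n k := by
  rcases Splus_cases n hx with ⟨hxS, hpos⟩ | ⟨hxS, hxR⟩
  · simp only [Sset, Set.mem_union] at hxS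
    rcases hxS with ((((h|h)|h)|h)|h)
    · simp only [O1, Set.mem_setOf_eq] at h
      obtain ⟨i, h1, h2, r, hx' | hx'⟩ := h <;> subst hx' <;>
        simp only [Prod.snd_add, Prod.snd_neg, Prod.smul_snd, eps_snd, cvec_snd,
          smul_eq_mul, mul_one, neg_zero, zero_add] at hpos
      · have hr : (0:ℤ) ≤ r := by exact_mod_cast le_of_lt hpos
        obtain ⟨m, hm⟩ := uniform n hn i i 1 0 (2*r) h1 le_rfl h2 (by omega) (by omega)
        exact ⟨m, by rw [← hm]; push_cast; module⟩
      · have hr : (1:ℤ) ≤ r := by exact_mod_cast hpos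
        obtain ⟨m, hm⟩ := uniform n hn i i (-1) 0 (2*r) h1 le_rfl h2 (by omega) (by omega)
        exact ⟨m, by rw [← hm]; push_cast; module⟩
    · simp only [O2, Set.mem_setOf_eq] at h
      obtain ⟨i, h1, h2, r, hx' | hx'⟩ := h <;> subst hx' <;>
        simp only [Prod.snd_add, Prod.snd_neg, Prod.smul_snd, eps_snd, cvec_snd,
          smul_eq_mul, mul_one, mul_zero, neg_zero, zero_add] at hpos
      · have hr : (0:ℤ) < 2*r := by exact_mod_cast hpos
        obtain ⟨m, hm⟩ := uniform n hn i i 2 0 (4*r) h1 le_rfl h2 (by omega) (by omega)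
        exact ⟨m, by rw [← hm]; push_cast; module⟩
      · have hr : (0:ℤ) < 2*r := by exact_mod_cast hpos
        obtain ⟨m, hm⟩ := uniform n hn i i (-2) 0 (4*r) h1 le_rfl h2 (by omega) (by omega)
        exact ⟨m, by rw [← hm]; push_cast; module⟩
    · simp only [O3, Set.mem_setOf_eq] at h
      obtain ⟨i, h1, h2, r, hx' | hx'⟩ := h <;> subst hx' <;>
        simp only [Prod.snd_add, Prod.snd_neg, Prod.smul_snd, eps_snd, cvec_snd,
          smul_eq_mul, mul_one, neg_zero, zero_add] at hpos
      · have hr : (0:ℤ) ≤ r := by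
          have : (-1:ℝ) < (r:ℝ) := by linarith
          have : (-1:ℤ) < r := by exact_mod_cast this
          omega
        obtain ⟨m, hm⟩ := uniform n hn i i 1 0 (2*r+1) h1 le_rfl h2 (by omega) (by omega)
        exact ⟨m, by rw [← hm]; push_cast; module⟩
      · have hr : (0:ℤ) ≤ r := by
          have : (-1:ℝ) < (r:ℝ) := by linarith
          have : (-1:ℤ) < r := by exact_mod_cast this
          omega
        obtain ⟨m, hm⟩ := uniform n hn i i (-1) 0 (2*r+1) h1 le_rfl h2 (by omega) (by omega)
        exact ⟨m, by rw [← hm]; push_cast; module⟩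
    · simp only [O4, Set.mem_setOf_eq] at h
      obtain ⟨i, h1, h2, r, hx' | hx'⟩ := h <;> subst hx' <;>
        simp only [Prod.snd_add, Prod.snd_neg, Prod.smul_snd, eps_snd, cvec_snd,
          smul_eq_mul, mul_one, mul_zero, neg_zero, zero_add] at hpos
      · have hr : (0:ℤ) < 2*r+1 := by exact_mod_cast hpos
        obtain ⟨m, hm⟩ := uniform n hn i i 2 0 (2*(2*r+1)) h1 le_rfl h2 (by omega) (by omega)
        exact ⟨m, by rw [← hm]; push_cast; module⟩
      · have hr : (0:ℤ) < 2*r+1 := by exact_mod_cast hpos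
        obtain ⟨m, hm⟩ := uniform n hn i i (-2) 0 (2*(2*r+1)) h1 le_rfl h2 (by omega) (by omega)
        exact ⟨m, by rw [← hm]; push_cast; module⟩
    · simp only [O5, Set.mem_setOf_eq] at h
      obtain ⟨i, j, h1, hij, hj, r, hx' | hx' | hx' | hx'⟩ := h <;> subst hx' <;>
        simp only [Prod.snd_add, Prod.snd_sub, Prod.snd_neg, Prod.smul_snd, eps_snd,
          cvec_snd, smul_eq_mul, mul_one, neg_zero, zero_add, add_zero, sub_zero,
          zero_sub] at hpos
      · have hr : (1:ℤ) ≤ r := by exact_mod_cast hpos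
        obtain ⟨m, hm⟩ := uniform n hn i j 1 1 (2*r) h1 (le_of_lt hij) hj (by omega) (by omega)
        exact ⟨m, by rw [← hm]; push_cast; module⟩
      · have hr : (1:ℤ) ≤ r := by exact_mod_cast hpos
        obtain ⟨m, hm⟩ := uniform n hn i j 1 (-1) (2*r) h1 (le_of_lt hij) hj (by omega) (by omega)
        exact ⟨m, by rw [← hm]; push_cast; module⟩
      · have hr : (1:ℤ) ≤ r := by exact_mod_cast hpos
        obtain ⟨m, hm⟩ := uniform n hn i j (-1) 1 (2*r) h1 (le_of_lt hij) hj (by omega) (by omega)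
        exact ⟨m, by rw [← hm]; push_cast; module⟩
      · have hr : (1:ℤ) ≤ r := by exact_mod_cast hpos
        obtain ⟨m, hm⟩ := uniform n hn i j (-1) (-1) (2*r) h1 (le_of_lt hij) hj (by omega) (by omega)
        exact ⟨m, by rw [← hm]; push_cast; module⟩
  · simp only [Rtplus, Set.mem_setOf_eq] at hxR
    rcases hxR with ⟨i, h1, h2, hx' | hx'⟩ | ⟨i, j, h1, hij, hj, hx' | hx'⟩ <;> subst hx'
    · obtain ⟨m, hm⟩ := uniform n hn i i 1 0 0 h1 le_rfl h2 (by omega) (by omega)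
      exact ⟨m, by rw [← hm]; push_cast; module⟩
    · obtain ⟨m, hm⟩ := uniform n hn i i 2 0 0 h1 le_rfl h2 (by omega) (by omega)
      exact ⟨m, by rw [← hm]; push_cast; module⟩
    · obtain ⟨m, hm⟩ := uniform n hn i j 1 1 0 h1 (le_of_lt hij) hj (by omega) (by omega)
      exact ⟨m, by rw [← hm]; push_cast; module⟩
    · obtain ⟨m, hm⟩ := uniform n hn i j 1 (-1) 0 h1 (le_of_lt hij) hj (by omega) (by omega)
      exact ⟨m, by rw [← hm]; push_cast; module⟩

end Aux6

/-- `S = S⁺ ⊔ (−S⁺)`, and `S⁺` consists exactly of the elements of `S` that are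
nonnegative rational combinations of `a_0, …, a_n` (such an expression can be chosen with all
coefficients nonnegative half-integers). -/
theorem positive_affine_roots (n : ℕ) (hn : 2 ≤ n) :
    (Sset n = Splus n ∪ (fun x => -x) '' Splus n) ∧
    Disjoint (Splus n) ((fun x => -x) '' Splus n) ∧
    (∀ x ∈ Sset n, (x ∈ Splus n ↔ ∃ q : ℕ → ℚ, (∀ k, 0 ≤ q k) ∧
        x = ∑ k ∈ Finset.range (n+1), (q k : ℝ) • aRootF n k)) ∧
    (∀ x ∈ Splus n, ∃ m : ℕ → ℕ,
        x = ∑ k ∈ Finset.range (n+1), ((m k : ℝ) / 2) • aRootF n k) := by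
  refine ⟨?_, ?_, ?_, fun x hx => splus_expand n hn hx⟩
  · -- S = S⁺ ∪ (−S⁺)
    ext x
    simp only [Set.mem_union, Set.mem_image]
    constructor
    · intro hx
      rcases lt_trichotomy x.2 0 with h | h | h
      · exact Or.inr ⟨-x, mem_Splus_of_pos n (Sset_neg n hx)
          (by rw [Prod.snd_neg]; linarith), neg_neg x⟩
      · rcases zero_level n hn hx h with hR | hR
        · exact Or.inl (mem_Splus_of_Rt n hx hR)
        · exact Or.inr ⟨-x, mem_Splus_of_Rt n (Sset_neg n hx) hR, neg_neg x⟩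
      · exact Or.inl (mem_Splus_of_pos n hx h)
    · rintro (hx | ⟨y, hy, rfl⟩)
      · rcases Splus_cases n hx with ⟨hS, _⟩ | ⟨hS, _⟩ <;> exact hS
      · rcases Splus_cases n hy with ⟨hS, _⟩ | ⟨hS, _⟩ <;> exact Sset_neg n hS
  · -- disjointness
    rw [Set.disjoint_left]
    rintro x hx ⟨y, hy, hyx⟩
    rcases Splus_cases n hx with ⟨hxS, hxp⟩ | ⟨hxS, hxR⟩ <;>
      rcases Splus_cases n hy with ⟨hyS, hyp⟩ | ⟨hyS, hyR⟩
    · rw [← hyx, Prod.snd_neg] at hxp; linarith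
    · have h0 := Rtplus_snd n hyR
      rw [← hyx, Prod.snd_neg, h0] at hxp
      norm_num at hxp
    · have h0 := Rtplus_snd n hxR
      rw [← hyx, Prod.snd_neg] at h0
      linarith
    · have h1 := wlin_pos_Rtplus n hxR
      have h2 := wlin_pos_Rtplus n hyR
      rw [← hyx, wlin_neg] at h1
      linarith
  · -- characterization of S⁺
    intro x hxS
    constructor
    · intro hx
      obtain ⟨m, hm⟩ := splus_expand n hn hx
      refine ⟨fun k => (m k : ℚ)/2, fun k => by positivity, ?_⟩
      rw [hm]
      refine Finset.sum_congr rfl fun k _ => ?_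
      congr 1
      push_cast
      ring
    · rintro ⟨q, hq, hsum⟩
      have hsnd : x.2 = (q 0 : ℝ) := by
        rw [hsum]; exact snd_of_sum n hn _
      have h0le : (0:ℝ) ≤ (q 0 : ℝ) := by exact_mod_cast hq 0
      by_cases hpos : 0 < x.2
      · exact mem_Splus_of_pos n hxS hpos
      · have h20 : x.2 = 0 := le_antisymm (not_lt.1 hpos) (hsnd ▸ h0le)
        have hq0 : (q 0 : ℝ) = 0 := by rw [← hsnd, h20]
        have hw : 0 ≤ wlin n x := by
          rw [hsum, wlin_sum]
          apply Finset.sum_nonneg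
          intro k hk
          rw [wlin_smul]
          by_cases hk0 : k = 0
          · subst hk0; rw [hq0, zero_mul]
          · have h1k : 1 ≤ k := by omega
            have hkn : k ≤ n := by rw [Finset.mem_range] at hk; omega
            exact mul_nonneg (by exact_mod_cast hq k) (wlin_aRootF_nonneg n hn h1k hkn)
        rcases zero_level n hn hxS h20 with hR | hR
        · exact mem_Splus_of_Rt n hxS hR
        · exfalso
          have hlt := wlin_pos_Rtplus n hR
          rw [wlin_neg] at hlt
          linarith

end CvC
end
end
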